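/- Let b ∈ ℝ^m with |b(i)| ≤ 1 for all i and let q_* = Σ_{i=0}^m b''(i)·e_{ν_i} be the subvertex. For every ℓ-positive vector u, ⟨u⁺, q_*⟩ ≥ 0 and min{⟨u⁺, x⟩ : x ∈ P(b)} ≥ ⟨u⁺, q_*⟩. If moreover Σ_{i=1}^m b(i) ≤ 2 − m, then q_* ∈ P(b) and this inequality is an equality. -/

import Mathlib

open Finset

/-- The value λ(k) for λ ∈ Λ = {0,1}^m, extended by the conventions λ(0) = 0 and
λ(m+1) = 1 (positions 1,…,m carry the actual values of λ). -/
def lamExt (m : ℕ) (lam : Fin m → Bool) (k : ℕ) : ℕ :=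
  if h : 1 ≤ k ∧ k ≤ m then (if lam ⟨k - 1, by omega⟩ then 1 else 0)
  else if k = 0 then 0 else 1

/-- The vector ℓ_i ∈ ℝ^Λ, ℓ_i(λ) = (−1)^{λ(i)}, for 0 ≤ i ≤ m. -/
def ell (m : ℕ) (i : ℕ) (lam : Fin m → Bool) : ℝ := (-1) ^ lamExt m lam i

/-- The standard inner product on ℝ^Λ. -/
def ip (m : ℕ) (x y : (Fin m → Bool) → ℝ) : ℝ := ∑ lam : Fin m → Bool, x lam * y lam

/-- The polytope P(b). -/
def Pb (m : ℕ) (b : ℕ → ℝ) : Set ((Fin m → Bool) → ℝ) :=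
  {x | ip m (ell m 0) x = 1 ∧ (∀ i ∈ Finset.Icc 1 m, ip m (ell m i) x = b i) ∧
    ∀ lam, 0 ≤ x lam}

/-- b''(i) = (b(i)+1)/2 for 1 ≤ i ≤ m and b''(0) = 1 − Σ_{i=1}^m b''(i). -/
noncomputable def b'' (m : ℕ) (b : ℕ → ℝ) (i : ℕ) : ℝ :=
  if i = 0 then 1 - ∑ j ∈ Finset.Icc 1 m, (b j + 1) / 2 else (b i + 1) / 2

/-- ν_j ∈ Λ: ν_j(k) = 1 − δ_{jk}; in particular ν_0 = (1,…,1). -/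
def nu (m j : ℕ) : Fin m → Bool := fun k => decide ((k : ℕ) + 1 ≠ j)

/-- The subvertex q_* = Σ_{i=0}^m b''(i)·e_{ν_i}. -/
noncomputable def subvertex (m : ℕ) (b : ℕ → ℝ) : (Fin m → Bool) → ℝ :=
  fun lam => ∑ i ∈ Finset.range (m + 1), b'' m b i * (if lam = nu m i then 1 else 0)

/-- u is ℓ-positive if u = Σ_{i=0}^m a_i ℓ_i with a_1,…,a_m > 0. -/
def lpos (m : ℕ) (u : (Fin m → Bool) → ℝ) : Prop :=
  ∃ a : ℕ → ℝ, (∀ i ∈ Finset.Icc 1 m, 0 < a i) ∧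
    u = fun lam => ∑ i ∈ Finset.range (m + 1), a i * ell m i lam

/-- The truncation u⁺ = max{u(·), 0}. -/
noncomputable def truncPos (m : ℕ) (u : (Fin m → Bool) → ℝ) : (Fin m → Bool) → ℝ :=
  fun lam => max (u lam) 0

lemma lamExt_cases (m : ℕ) (lam : Fin m → Bool) (k : ℕ) :
    lamExt m lam k = 0 ∨ lamExt m lam k = 1 := by
  unfold lamExt; split_ifs <;> simp

lemma ell_zero' (m : ℕ) (lam : Fin m → Bool) : ell m 0 lam = 1 := by
  simp [ell, lamExt]

lemma ell_eq_ite (m k : ℕ) (lam : Fin m → Bool) :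
    ell m k lam = if lamExt m lam k = 0 then 1 else -1 := by
  rcases lamExt_cases m lam k with h | h <;> simp [ell, h]

lemma lamExt_nu (m i k : ℕ) (hk1 : 1 ≤ k) (hk2 : k ≤ m) :
    lamExt m (nu m i) k = if k = i then 0 else 1 := by
  unfold lamExt
  rw [dif_pos ⟨hk1, hk2⟩]
  have h : k - 1 + 1 = k := by omega
  by_cases hki : k = i
  · simp [nu, h, hki]; omega
  · simp [nu, h, hki]

lemma ell_nu (m i k : ℕ) (hk1 : 1 ≤ k) (hk2 : k ≤ m) :
    ell m k (nu m i) = if k = i then 1 else -1 := by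
  rw [ell_eq_ite, lamExt_nu m i k hk1 hk2]
  by_cases h : k = i <;> simp [h]

lemma sum_range_split (m : ℕ) (f : ℕ → ℝ) :
    ∑ i ∈ Finset.range (m+1), f i = f 0 + ∑ i ∈ Finset.Icc 1 m, f i := by
  induction m with
  | zero => simp
  | succ n ih =>
      rw [Finset.sum_range_succ, ih, Finset.sum_Icc_succ_top (Nat.le_add_left 1 n)]
      ring

lemma ip_sum_left (m : ℕ) {ι : Type*} (s : Finset ι) (c : ι → ℝ)
    (f : ι → (Fin m → Bool) → ℝ) (x : (Fin m → Bool) → ℝ) :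
    ip m (fun lam => ∑ i ∈ s, c i * f i lam) x = ∑ i ∈ s, c i * ip m (f i) x := by
  simp only [ip, Finset.sum_mul, Finset.mul_sum, mul_assoc]
  exact Finset.sum_comm

lemma ip_subvertex (m : ℕ) (b : ℕ → ℝ) (y : (Fin m → Bool) → ℝ) :
    ip m y (subvertex m b) = ∑ i ∈ Finset.range (m+1), b'' m b i * y (nu m i) := by
  simp only [ip, subvertex, Finset.mul_sum]
  rw [Finset.sum_comm]
  refine Finset.sum_congr rfl fun i _ => ?_
  simp [mul_ite, mul_one, mul_zero, Finset.sum_ite_eq', mul_comm]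

lemma max_add_max_le (c A B : ℝ) (hc : c ≤ 0) (hA : 0 ≤ A) (hB : 0 ≤ B) :
    max (c + 2*B) 0 + max (c + 2*A) 0 ≤ max (c + 2*(B + A)) 0 := by
  simp only [max_def]; split_ifs <;> linarith

lemma sum_max_le {ι : Type*} (c : ℝ) (hc : c ≤ 0) (a : ι → ℝ) :
    ∀ S : Finset ι, (∀ i ∈ S, 0 ≤ a i) →
      ∑ i ∈ S, max (c + 2 * a i) 0 ≤ max (c + 2 * ∑ i ∈ S, a i) 0 := by
  intro S
  induction S using Finset.cons_induction with
  | empty => intro _; simpa using le_max_right c 0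
  | cons j S hj ih =>
      intro ha
      rw [Finset.sum_cons, Finset.sum_cons]
      have hA : 0 ≤ ∑ i ∈ S, a i :=
        Finset.sum_nonneg fun i hi => ha i (Finset.mem_cons_of_mem hi)
      have hB : 0 ≤ a j := ha j (Finset.mem_cons_self j S)
      have h1 := ih fun i hi => ha i (Finset.mem_cons_of_mem hi)
      have h2 := max_add_max_le c (∑ i ∈ S, a i) (a j) hc hA hB
      calc max (c + 2*a j) 0 + ∑ i ∈ S, max (c + 2*a i) 0
          ≤ max (c + 2*a j) 0 + max (c + 2*∑ i ∈ S, a i) 0 := by linarith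
        _ ≤ max (c + 2*(a j + ∑ i ∈ S, a i)) 0 := h2

lemma b''_zero (m : ℕ) (b : ℕ → ℝ) :
    b'' m b 0 = 1 - ∑ j ∈ Finset.Icc 1 m, (b j + 1)/2 := by simp [b'']

lemma ip_avg (m : ℕ) (f g x : (Fin m → Bool) → ℝ) :
    ip m (fun lam => (f lam + g lam)/2) x = (ip m f x + ip m g x)/2 := by
  simp only [ip, ← Finset.sum_add_distrib, Finset.sum_div]
  exact Finset.sum_congr rfl fun lam _ => by ring

/-- For ℓ-positive u: ⟨u⁺, q_*⟩ ≥ 0, the minimum of ⟨u⁺, x⟩ over P(b) is at least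
⟨u⁺, q_*⟩, and if Σ b(i) ≤ 2 − m then q_* ∈ P(b) and ⟨u⁺, q_*⟩ is this minimum. -/
theorem stmt17 (m : ℕ) (hm : 1 ≤ m) (b : ℕ → ℝ)
    (hb : ∀ i ∈ Finset.Icc 1 m, |b i| ≤ 1)
    (u : (Fin m → Bool) → ℝ) (hu : lpos m u) :
    0 ≤ ip m (truncPos m u) (subvertex m b) ∧
    (∀ x ∈ Pb m b, ip m (truncPos m u) (subvertex m b) ≤ ip m (truncPos m u) x) ∧
    (∑ i ∈ Finset.Icc 1 m, b i ≤ 2 - m →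
      subvertex m b ∈ Pb m b ∧
      IsLeast ((fun x => ip m (truncPos m u) x) '' Pb m b)
        (ip m (truncPos m u) (subvertex m b))) := by
  obtain ⟨a, hapos, hu⟩ := hu
  have hbge : ∀ i ∈ Finset.Icc 1 m, (-1:ℝ) ≤ b i := fun i hi => (abs_le.mp (hb i hi)).1
  have hb2 : ∀ i ∈ Finset.Icc 1 m, b'' m b i = (b i + 1)/2 := by
    intro i hi
    have hne : i ≠ 0 := by have := Finset.mem_Icc.mp hi; omega
    simp [b'', hne]
  have hb2pos : ∀ i ∈ Finset.Icc 1 m, 0 ≤ (b i + 1)/2 := fun i hi => by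
    have := hbge i hi; linarith
  set c0 := a 0 - ∑ i ∈ Finset.Icc 1 m, a i with hc0
  have hueval : ∀ lam, u lam
      = c0 + 2 * ∑ i ∈ (Finset.Icc 1 m).filter (fun i => lamExt m lam i = 0), a i := by
    intro lam
    rw [hu]
    show ∑ i ∈ Finset.range (m+1), a i * ell m i lam = _
    rw [sum_range_split, ell_zero', mul_one]
    have hterm : ∀ i ∈ Finset.Icc 1 m,
        a i * ell m i lam = (if lamExt m lam i = 0 then 2 * a i else 0) - a i := by
      intro i hi
      rw [ell_eq_ite]
      split_ifs <;> ring
    rw [Finset.sum_congr rfl hterm, Finset.sum_sub_distrib, ← Finset.sum_filter,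
      ← Finset.mul_sum, hc0]
    ring
  have hfil : ∀ j ∈ Finset.Icc 1 m,
      (Finset.Icc 1 m).filter (fun i => lamExt m (nu m j) i = 0) = {j} := by
    intro j hj
    ext i
    simp only [Finset.mem_filter, Finset.mem_singleton]
    constructor
    · rintro ⟨hi, h⟩
      obtain ⟨h1, h2⟩ := Finset.mem_Icc.mp hi
      rw [lamExt_nu m j i h1 h2] at h
      by_contra hne
      simp [hne] at h
    · rintro rfl
      obtain ⟨h1, h2⟩ := Finset.mem_Icc.mp hj
      exact ⟨hj, by rw [lamExt_nu m i i h1 h2]; simp⟩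
  have hfil0 : (Finset.Icc 1 m).filter (fun i => lamExt m (nu m 0) i = 0) = ∅ := by
    ext i
    simp only [Finset.mem_filter, Finset.notMem_empty, iff_false, not_and]
    intro hi h
    obtain ⟨h1, h2⟩ := Finset.mem_Icc.mp hi
    rw [lamExt_nu m 0 i h1 h2] at h
    have hne : i ≠ 0 := by omega
    simp [hne] at h
  have hunu0 : u (nu m 0) = c0 := by rw [hueval, hfil0]; simp
  have hunu : ∀ j ∈ Finset.Icc 1 m, u (nu m j) = c0 + 2 * a j := by
    intro j hj; rw [hueval, hfil j hj, Finset.sum_singleton]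
  have ipq : ip m (truncPos m u) (subvertex m b)
      = b'' m b 0 * max c0 0 + ∑ i ∈ Finset.Icc 1 m, (b i + 1)/2 * max (c0 + 2 * a i) 0 := by
    rw [ip_subvertex, sum_range_split]
    congr 1
    · rw [show truncPos m u (nu m 0) = max (u (nu m 0)) 0 from rfl, hunu0]
    · refine Finset.sum_congr rfl fun i hi => ?_
      rw [hb2 i hi, show truncPos m u (nu m i) = max (u (nu m i)) 0 from rfl, hunu i hi]
  have keyalg : b'' m b 0 * c0 + ∑ i ∈ Finset.Icc 1 m, (b i + 1)/2 * (c0 + 2 * a i)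
      = a 0 + ∑ i ∈ Finset.Icc 1 m, a i * b i := by
    have h1 : ∑ i ∈ Finset.Icc 1 m, (b i + 1)/2 * (c0 + 2 * a i)
        = (∑ i ∈ Finset.Icc 1 m, (b i + 1)/2) * c0
          + ∑ i ∈ Finset.Icc 1 m, (a i * b i + a i) := by
      rw [Finset.sum_mul, ← Finset.sum_add_distrib]
      exact Finset.sum_congr rfl fun i _ => by ring
    rw [h1, Finset.sum_add_distrib, b''_zero]
    linear_combination hc0
  have hmain : ∀ x ∈ Pb m b,
      ip m (truncPos m u) (subvertex m b) ≤ ip m (truncPos m u) x := by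
    rintro x ⟨hx0, hxI, hxpos⟩
    rcases le_or_gt 0 c0 with hc | hc
    · have hupos : ∀ lam, 0 ≤ u lam := by
        intro lam
        rw [hueval]
        have h0 : 0 ≤ ∑ i ∈ (Finset.Icc 1 m).filter (fun i => lamExt m lam i = 0), a i :=
          Finset.sum_nonneg fun i hi => (hapos i (Finset.mem_of_mem_filter i hi)).le
        linarith
      have htp : truncPos m u = u := funext fun lam => max_eq_left (hupos lam)
      rw [htp]
      have hlin : ip m (fun lam => ∑ i ∈ Finset.range (m+1), a i * ell m i lam) x
          = ∑ i ∈ Finset.range (m+1), a i * ip m (ell m i) x :=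
        ip_sum_left m _ a (fun i => ell m i) x
      have hipux : ip m u x = a 0 + ∑ i ∈ Finset.Icc 1 m, a i * b i := by
        rw [hu, hlin, sum_range_split, hx0, mul_one]
        congr 1
        exact Finset.sum_congr rfl fun i hi => by rw [hxI i hi]
      have hipuq : ip m u (subvertex m b) = a 0 + ∑ i ∈ Finset.Icc 1 m, a i * b i := by
        rw [ip_subvertex, sum_range_split, hunu0]
        have h2 : ∑ i ∈ Finset.Icc 1 m, b'' m b i * u (nu m i)
            = ∑ i ∈ Finset.Icc 1 m, (b i + 1)/2 * (c0 + 2 * a i) :=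
          Finset.sum_congr rfl fun i hi => by rw [hb2 i hi, hunu i hi]
        rw [h2]
        exact keyalg
      rw [hipuq, hipux]
    · set w : (Fin m → Bool) → ℝ :=
        fun lam => ∑ i ∈ Finset.Icc 1 m,
          max (c0 + 2*a i) 0 * (if lamExt m lam i = 0 then (1:ℝ) else 0) with hw
      have hwle : ∀ lam, w lam ≤ truncPos m u lam := by
        intro lam
        show w lam ≤ max (u lam) 0
        rw [hueval lam]
        have e1 : w lam = ∑ i ∈ (Finset.Icc 1 m).filter (fun i => lamExt m lam i = 0),
            max (c0 + 2*a i) 0 := by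
          rw [hw, Finset.sum_filter]
          exact Finset.sum_congr rfl fun i _ => by split_ifs <;> simp
        rw [e1]
        exact sum_max_le c0 hc.le a _
          (fun i hi => (hapos i (Finset.mem_of_mem_filter i hi)).le)
      have hlinw : ip m w x = ∑ i ∈ Finset.Icc 1 m, max (c0 + 2*a i) 0
          * ip m (fun lam => if lamExt m lam i = 0 then (1:ℝ) else 0) x := by
        rw [hw]
        exact ip_sum_left m _ (fun i => max (c0 + 2*a i) 0)
          (fun i lam => if lamExt m lam i = 0 then (1:ℝ) else 0) x
      have hipwx : ip m w x
          = ∑ i ∈ Finset.Icc 1 m, max (c0 + 2*a i) 0 * ((1 + b i)/2) := by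
        rw [hlinw]
        refine Finset.sum_congr rfl fun i hi => ?_
        congr 1
        have e2 : (fun lam => if lamExt m lam i = 0 then (1:ℝ) else 0)
            = fun lam => (ell m 0 lam + ell m i lam)/2 := by
          funext lam
          rw [ell_zero', ell_eq_ite]
          split_ifs <;> norm_num
        rw [e2, ip_avg, hx0, hxI i hi]
      have hipwle : ip m w x ≤ ip m (truncPos m u) x := by
        unfold ip
        exact Finset.sum_le_sum fun lam _ =>
          mul_le_mul_of_nonneg_right (hwle lam) (hxpos lam)
      have hqval : ip m (truncPos m u) (subvertex m b)
          = ∑ i ∈ Finset.Icc 1 m, max (c0 + 2*a i) 0 * ((1 + b i)/2) := by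
        rw [ipq, max_eq_right hc.le, mul_zero, zero_add]
        exact Finset.sum_congr rfl fun i hi => by ring
      rw [hqval, ← hipwx]
      exact hipwle
  refine ⟨?_, hmain, fun hS => ?_⟩
  · rcases le_or_gt 0 c0 with hc | hc
    · have h7 : ∑ i ∈ Finset.Icc 1 m, (b i + 1)/2 * max (c0 + 2*a i) 0
          = ∑ i ∈ Finset.Icc 1 m, (b i + 1)/2 * (c0 + 2*a i) :=
        Finset.sum_congr rfl fun i hi => by
          rw [max_eq_left (by have := hapos i hi; linarith)]
      rw [ipq, max_eq_left hc, h7, keyalg]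
      have h5 : ∑ i ∈ Finset.Icc 1 m, (a i * (b i + 1))
          = ∑ i ∈ Finset.Icc 1 m, a i * b i + ∑ i ∈ Finset.Icc 1 m, a i := by
        rw [← Finset.sum_add_distrib]
        exact Finset.sum_congr rfl fun i _ => by ring
      have h6 : 0 ≤ ∑ i ∈ Finset.Icc 1 m, (a i * (b i + 1)) :=
        Finset.sum_nonneg fun i hi =>
          mul_nonneg (hapos i hi).le (by have := hbge i hi; linarith)
      linarith
    · rw [ipq, max_eq_right hc.le, mul_zero, zero_add]
      exact Finset.sum_nonneg fun i hi =>
        mul_nonneg (hb2pos i hi) (le_max_right _ _)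
  · have hb0 : 0 ≤ b'' m b 0 := by
      have hsum : ∑ j ∈ Finset.Icc 1 m, (b j + 1)/2
          = (∑ j ∈ Finset.Icc 1 m, b j + m)/2 := by
        rw [← Finset.sum_div, Finset.sum_add_distrib, Finset.sum_const, Nat.card_Icc,
          nsmul_eq_mul]
        norm_num
      rw [b''_zero, hsum]
      linarith
    have hmem : subvertex m b ∈ Pb m b := by
      refine ⟨?_, ?_, ?_⟩
      · rw [ip_subvertex, sum_range_split]
        have h8 : ∀ i ∈ Finset.Icc 1 m, b'' m b i * ell m 0 (nu m i) = (b i + 1)/2 :=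
          fun i hi => by rw [hb2 i hi, ell_zero', mul_one]
        rw [Finset.sum_congr rfl h8, ell_zero', mul_one, b''_zero]
        ring
      · intro j hj
        obtain ⟨hj1, hj2⟩ := Finset.mem_Icc.mp hj
        rw [ip_subvertex]
        have hterm : ∀ i ∈ Finset.range (m+1), b'' m b i * ell m j (nu m i)
            = (if j = i then 2 * b'' m b i else 0) - b'' m b i := by
          intro i _
          rw [ell_nu m i j hj1 hj2]
          split_ifs <;> ring
        have hsum1 : ∑ i ∈ Finset.range (m+1), b'' m b i = 1 := by
          rw [sum_range_split, Finset.sum_congr rfl hb2, b''_zero]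
          ring
        rw [Finset.sum_congr rfl hterm, Finset.sum_sub_distrib, Finset.sum_ite_eq,
          if_pos (Finset.mem_range.mpr (by omega)), hsum1, hb2 j hj]
        ring
      · intro lam
        refine Finset.sum_nonneg fun i hi => ?_
        have hbi : 0 ≤ b'' m b i := by
          rcases Nat.eq_zero_or_pos i with rfl | hip
          · exact hb0
          · have him : i ∈ Finset.Icc 1 m :=
              Finset.mem_Icc.mpr ⟨hip, by have := Finset.mem_range.mp hi; omega⟩
            rw [hb2 i him]; exact hb2pos i him
        split_ifs
        · simpa using hbi
        · simp
    exact ⟨hmem, ⟨⟨subvertex m b, hmem, rfl⟩, fun y ⟨x, hx, hxy⟩ => hxy ▸ hmain x hx⟩⟩
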